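/- arXiv:0907.5412 — 2 statements merged into one kernel-verified Lean document; each statement's English description precedes it below -/
import Mathlib

section
/- The function Q(x) = 3^{1/4} / cosh^{1/2}(2x) satisfies the ODE Q''(x) + Q(x)^5 = Q(x) for all real x. -/
open Real

private lemma cosh_ne (x : ℝ) : Real.cosh (2*x) ≠ 0 := ne_of_gt (Real.cosh_pos (2*x))

private lemma hd1 (x : ℝ) :
    HasDerivAt (fun x : ℝ => (3 : ℝ) ^ ((1 : ℝ)/4) * (Real.cosh (2*x)) ^ (-(1 : ℝ)/2))
      ((3 : ℝ) ^ ((1 : ℝ)/4) * ((Real.sinh (2*x) * 2) * (-(1:ℝ)/2) * (Real.cosh (2*x)) ^ (-(1:ℝ)/2 - 1))) x := by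
  have h2 : HasDerivAt (fun x : ℝ => 2 * x) 2 x := by
    simpa using (hasDerivAt_id x).const_mul (2:ℝ)
  have hc : HasDerivAt (fun x : ℝ => Real.cosh (2*x)) (Real.sinh (2*x) * 2) x :=
    (Real.hasDerivAt_cosh (2*x)).comp x h2
  exact (hc.rpow_const (Or.inl (cosh_ne x))).const_mul _

private lemma hd2 (x : ℝ) :
    HasDerivAt (fun x : ℝ => (3 : ℝ) ^ ((1 : ℝ)/4) * ((Real.sinh (2*x) * 2) * (-(1:ℝ)/2) * (Real.cosh (2*x)) ^ (-(1:ℝ)/2 - 1)))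
      ((3 : ℝ) ^ ((1 : ℝ)/4) * ((Real.cosh (2*x) * 2 * 2 * (-(1:ℝ)/2)) * (Real.cosh (2*x)) ^ (-(1:ℝ)/2 - 1)
        + (Real.sinh (2*x) * 2) * (-(1:ℝ)/2) * ((Real.sinh (2*x) * 2) * (-(1:ℝ)/2 - 1) * (Real.cosh (2*x)) ^ (-(1:ℝ)/2 - 1 - 1)))) x := by
  have h2 : HasDerivAt (fun x : ℝ => 2 * x) 2 x := by
    simpa using (hasDerivAt_id x).const_mul (2:ℝ)
  have hc : HasDerivAt (fun x : ℝ => Real.cosh (2*x)) (Real.sinh (2*x) * 2) x :=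
    (Real.hasDerivAt_cosh (2*x)).comp x h2
  have hs : HasDerivAt (fun x : ℝ => Real.sinh (2*x)) (Real.cosh (2*x) * 2) x :=
    (Real.hasDerivAt_sinh (2*x)).comp x h2
  have hf : HasDerivAt (fun x : ℝ => Real.sinh (2*x) * 2 * (-(1:ℝ)/2))
      (Real.cosh (2*x) * 2 * 2 * (-(1:ℝ)/2)) x := (hs.mul_const 2).mul_const _
  have hg : HasDerivAt (fun x : ℝ => (Real.cosh (2*x)) ^ (-(1:ℝ)/2 - 1))
      ((Real.sinh (2*x) * 2) * (-(1:ℝ)/2 - 1) * (Real.cosh (2*x)) ^ (-(1:ℝ)/2 - 1 - 1)) x :=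
    hc.rpow_const (Or.inl (cosh_ne x))
  exact (hf.mul hg).const_mul ((3 : ℝ) ^ ((1 : ℝ)/4))

/-- The ground state `Q(x) = 3^{1/4} / cosh^{1/2}(2x)` satisfies `Q'' + Q^5 = Q`. -/
theorem ground_state_ODE (Q : ℝ → ℝ)
    (hQ : ∀ x, Q x = (3 : ℝ) ^ ((1 : ℝ)/4) * (Real.cosh (2*x)) ^ (-(1 : ℝ)/2)) :
    ∀ x, deriv (deriv Q) x + Q x ^ 5 = Q x := by
  have hQeq : Q = fun x => (3 : ℝ) ^ ((1 : ℝ)/4) * (Real.cosh (2*x)) ^ (-(1 : ℝ)/2) := funext hQ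
  subst hQeq
  intro x
  have hderiv : deriv (fun x : ℝ => (3 : ℝ) ^ ((1 : ℝ)/4) * (Real.cosh (2*x)) ^ (-(1 : ℝ)/2))
      = fun x => (3 : ℝ) ^ ((1 : ℝ)/4) * ((Real.sinh (2*x) * 2) * (-(1:ℝ)/2) * (Real.cosh (2*x)) ^ (-(1:ℝ)/2 - 1)) :=
    funext fun y => (hd1 y).deriv
  rw [hderiv, (hd2 x).deriv]
  simp only
  -- algebra
  set c : ℝ := (3 : ℝ) ^ ((1 : ℝ)/4) with hcdef
  set y : ℝ := Real.cosh (2*x) with hy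
  set s : ℝ := Real.sinh (2*x) with hsdef
  have hy0 : 0 < y := Real.cosh_pos (2*x)
  have hs2 : s ^ 2 = y ^ 2 - 1 := by
    have h := Real.cosh_sq_sub_sinh_sq (2*x)
    rw [← hy, ← hsdef] at h
    nlinarith [h]
  have hym12 : y ^ (-(1:ℝ)/2 - 1) = y ^ (-(1:ℝ)/2) / y := by
    rw [Real.rpow_sub hy0, Real.rpow_one]
  have hym52 : y ^ (-(1:ℝ)/2 - 1 - 1) = y ^ (-(1:ℝ)/2) / y / y := by
    rw [Real.rpow_sub hy0, Real.rpow_sub hy0, Real.rpow_one]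
  have hc4 : c ^ 4 = 3 := by
    rw [hcdef, ← Real.rpow_natCast ((3:ℝ) ^ ((1:ℝ)/4)) 4, ← Real.rpow_mul (by norm_num : (0:ℝ) ≤ 3)]
    norm_num
  have hQ5 : (c * y ^ (-(1:ℝ)/2)) ^ 5 = c ^ 4 * c * (y ^ (-(1:ℝ)/2) / y / y) := by
    rw [mul_pow, ← Real.rpow_natCast (y ^ (-(1:ℝ)/2)) 5, ← Real.rpow_mul hy0.le]
    rw [show (-(1:ℝ)/2) * ((5:ℕ):ℝ) = -(1:ℝ)/2 - 1 - 1 by push_cast; ring, hym52]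
    ring
  rw [hQ5, hc4, hym12, hym52]
  set u : ℝ := y ^ (-(1:ℝ)/2)
  field_simp
  linear_combination (3 * c * u) * hs2
end

section
/- Let R¹ and R² be parallelograms in ℝ² of the form Rⁱ = {(t,x) : |ξⁱ(t + sⁱ)| ≤ (λⁱ)² and |x − xⁱ + 3(ξⁱ)²(t + sⁱ)| ≤ λⁱ}, with λⁱ > 0, ξⁱ > 0, xⁱ, sⁱ ∈ ℝ and ξ¹ ≠ ξ². Then the Lebesgue measure of R¹ ∩ R² is at most C λ¹ λ² / ((ξ¹ + ξ²)|ξ¹ − ξ²|) for an absolute constant C. -/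
open MeasureTheory

private lemma para_aux (lam₁ lam₂ ξ₁ ξ₂ x₁ x₂ s₁ s₂ : ℝ)
    (h1 : 0 < lam₁) (h2 : 0 < lam₂) (hξ1 : 0 < ξ₁) (hξ2 : 0 < ξ₂)
    (hne : ξ₁ ≠ ξ₂) (hle : lam₁ ≤ lam₂) :
    volume ({p : ℝ × ℝ | |ξ₁ * (p.1 + s₁)| ≤ lam₁ ^ 2
                ∧ |p.2 - x₁ + 3 * ξ₁ ^ 2 * (p.1 + s₁)| ≤ lam₁}
            ∩ {p : ℝ × ℝ | |ξ₂ * (p.1 + s₂)| ≤ lam₂ ^ 2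
                ∧ |p.2 - x₂ + 3 * ξ₂ ^ 2 * (p.1 + s₂)| ≤ lam₂})
      ≤ ENNReal.ofReal (3 * lam₁ * lam₂ / ((ξ₁ + ξ₂) * |ξ₁ - ξ₂|)) := by
  set a : ℝ → ℝ := fun t => x₁ - 3 * ξ₁ ^ 2 * (t + s₁) with ha
  set b : ℝ → ℝ := fun t => x₂ - 3 * ξ₂ ^ 2 * (t + s₂) with hb
  set m : ℝ := 3 * ξ₂ ^ 2 - 3 * ξ₁ ^ 2 with hm
  set d : ℝ := x₁ - x₂ - 3 * ξ₁ ^ 2 * s₁ + 3 * ξ₂ ^ 2 * s₂ with hd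
  set L : ℝ := lam₁ + lam₂ with hL
  have hsum : 0 < ξ₁ + ξ₂ := by linarith
  have habsξ : 0 < |ξ₁ - ξ₂| := abs_pos.mpr (sub_ne_zero.mpr hne)
  have hab : ∀ t, a t - b t = d + m * t := by intro t; simp only [ha, hb, hm, hd]; ring
  have hmne : m ≠ 0 := by
    simp only [hm]
    intro h
    have h0 : (ξ₁ - ξ₂) * (ξ₁ + ξ₂) = 0 := by nlinarith
    rcases mul_eq_zero.mp h0 with h' | h'
    · exact hne (by linarith)
    · linarith
  have habs : |m| = 3 * ((ξ₁ + ξ₂) * |ξ₁ - ξ₂|) := by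
    rw [hm, show 3 * ξ₂ ^ 2 - 3 * ξ₁ ^ 2 = (3 * (ξ₁ + ξ₂)) * (ξ₂ - ξ₁) by ring,
      abs_mul, abs_of_pos (by linarith), abs_sub_comm]
    ring
  set T : Set ℝ := {t | |d + m * t| ≤ L} with hT
  have hTmeas : MeasurableSet T := by
    have : IsClosed T := isClosed_le (by fun_prop) continuous_const
    exact this.measurableSet
  set S' : Set (ℝ × ℝ) := {p | |p.2 - a p.1| ≤ lam₁ ∧ |p.2 - b p.1| ≤ lam₂} with hS'
  have hS'meas : MeasurableSet S' := by
    have hc1 : IsClosed {p : ℝ × ℝ | |p.2 - a p.1| ≤ lam₁} :=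
      isClosed_le (by fun_prop) continuous_const
    have hc2 : IsClosed {p : ℝ × ℝ | |p.2 - b p.1| ≤ lam₂} :=
      isClosed_le (by fun_prop) continuous_const
    exact (hc1.inter hc2).measurableSet
  have hsub : ({p : ℝ × ℝ | |ξ₁ * (p.1 + s₁)| ≤ lam₁ ^ 2
                ∧ |p.2 - x₁ + 3 * ξ₁ ^ 2 * (p.1 + s₁)| ≤ lam₁}
            ∩ {p : ℝ × ℝ | |ξ₂ * (p.1 + s₂)| ≤ lam₂ ^ 2
                ∧ |p.2 - x₂ + 3 * ξ₂ ^ 2 * (p.1 + s₂)| ≤ lam₂}) ⊆ S' := by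
    rintro ⟨t, x⟩ ⟨⟨-, h1'⟩, ⟨-, h2'⟩⟩
    have e1 : x - a t = x - x₁ + 3 * ξ₁ ^ 2 * (t + s₁) := by simp only [ha]; ring
    have e2 : x - b t = x - x₂ + 3 * ξ₂ ^ 2 * (t + s₂) := by simp only [hb]; ring
    exact ⟨by rw [e1]; exact h1', by rw [e2]; exact h2'⟩
  have hvT : volume T ≤ ENNReal.ofReal (2 * L / |m|) := by
    rcases hmne.lt_or_gt with hm' | hm'
    · -- m < 0
      have hsub' : T ⊆ Set.Icc ((L - d) / m) ((-L - d) / m) := by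
        intro t ht
        have h := abs_le.mp (show |d + m * t| ≤ L from ht)
        constructor
        · rw [div_le_iff_of_neg hm']; linarith [h.2]
        · rw [le_div_iff_of_neg hm']; linarith [h.1]
      calc volume T ≤ volume (Set.Icc ((L - d) / m) ((-L - d) / m)) := measure_mono hsub'
        _ = ENNReal.ofReal ((-L - d) / m - (L - d) / m) := Real.volume_Icc
        _ = ENNReal.ofReal (2 * L / |m|) := by
            congr 1
            rw [abs_of_neg hm']
            field_simp [hm'.ne]
            ring
    · -- 0 < m
      have hsub' : T ⊆ Set.Icc ((-L - d) / m) ((L - d) / m) := by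
        intro t ht
        have h := abs_le.mp (show |d + m * t| ≤ L from ht)
        constructor
        · rw [div_le_iff₀ hm']; linarith [h.1]
        · rw [le_div_iff₀ hm']; linarith [h.2]
      calc volume T ≤ volume (Set.Icc ((-L - d) / m) ((L - d) / m)) := measure_mono hsub'
        _ = ENNReal.ofReal ((L - d) / m - (-L - d) / m) := Real.volume_Icc
        _ = ENNReal.ofReal (2 * L / |m|) := by
            congr 1
            rw [abs_of_pos hm']
            field_simp
            ring
  calc volume ({p : ℝ × ℝ | |ξ₁ * (p.1 + s₁)| ≤ lam₁ ^ 2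
                ∧ |p.2 - x₁ + 3 * ξ₁ ^ 2 * (p.1 + s₁)| ≤ lam₁}
            ∩ {p : ℝ × ℝ | |ξ₂ * (p.1 + s₂)| ≤ lam₂ ^ 2
                ∧ |p.2 - x₂ + 3 * ξ₂ ^ 2 * (p.1 + s₂)| ≤ lam₂})
      ≤ volume S' := measure_mono hsub
    _ = ∫⁻ t, volume {x : ℝ | |x - a t| ≤ lam₁ ∧ |x - b t| ≤ lam₂} := by
        rw [MeasureTheory.Measure.volume_eq_prod, Measure.prod_apply hS'meas]
        rfl
    _ ≤ ∫⁻ t, T.indicator (fun _ => ENNReal.ofReal (2 * lam₁)) t := by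
        apply lintegral_mono
        intro t
        by_cases ht : t ∈ T
        · rw [Set.indicator_of_mem ht]
          have hsl : {x : ℝ | |x - a t| ≤ lam₁ ∧ |x - b t| ≤ lam₂}
              ⊆ Set.Icc (a t - lam₁) (a t + lam₁) := by
            intro x hx
            have h := abs_le.mp hx.1
            exact ⟨by linarith [h.1], by linarith [h.2]⟩
          calc volume {x : ℝ | |x - a t| ≤ lam₁ ∧ |x - b t| ≤ lam₂}
              ≤ volume (Set.Icc (a t - lam₁) (a t + lam₁)) := measure_mono hsl
            _ = ENNReal.ofReal (a t + lam₁ - (a t - lam₁)) := Real.volume_Icc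
            _ = ENNReal.ofReal (2 * lam₁) := by congr 1; ring
        · rw [Set.indicator_of_notMem ht]
          have hempty : {x : ℝ | |x - a t| ≤ lam₁ ∧ |x - b t| ≤ lam₂} = ∅ := by
            ext x
            simp only [Set.mem_setOf_eq, Set.mem_empty_iff_false, iff_false, not_and]
            intro hx1 hx2
            apply ht
            show |d + m * t| ≤ L
            rw [← hab]
            calc |a t - b t| = |(x - b t) - (x - a t)| := by congr 1; ring
              _ ≤ |x - b t| + |x - a t| := abs_sub _ _
              _ ≤ lam₂ + lam₁ := add_le_add hx2 hx1
              _ = L := by rw [hL]; ring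
          have hz : volume {x : ℝ | |x - a t| ≤ lam₁ ∧ |x - b t| ≤ lam₂} = 0 := by
            rw [hempty]; simp
          simpa using hz.le
    _ = ENNReal.ofReal (2 * lam₁) * volume T := by
        rw [lintegral_indicator hTmeas, setLIntegral_const]
    _ ≤ ENNReal.ofReal (2 * lam₁) * ENNReal.ofReal (2 * L / |m|) := by
        exact mul_le_mul_right hvT _
    _ = ENNReal.ofReal ((2 * lam₁) * (2 * L / |m|)) := (ENNReal.ofReal_mul (by positivity)).symm
    _ ≤ ENNReal.ofReal (3 * lam₁ * lam₂ / ((ξ₁ + ξ₂) * |ξ₁ - ξ₂|)) := by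
        apply ENNReal.ofReal_le_ofReal
        rw [habs]
        set D : ℝ := (ξ₁ + ξ₂) * |ξ₁ - ξ₂| with hD
        have hDpos : 0 < D := mul_pos hsum habsξ
        rw [show (2 * lam₁) * (2 * L / (3 * D)) = (4 * lam₁ * L) / (3 * D) by ring]
        rw [div_le_div_iff₀ (by positivity) hDpos]
        have hkey : 4 * lam₁ * L ≤ 9 * (lam₁ * lam₂) := by
          rw [hL]; nlinarith
        nlinarith [mul_le_mul_of_nonneg_right hkey hDpos.le]

/-- Area of intersection of two slanted parallelograms. -/
theorem parallelogram_intersection_area :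
    ∃ C : ℝ, 0 < C ∧
      ∀ (lam₁ lam₂ ξ₁ ξ₂ x₁ x₂ s₁ s₂ : ℝ),
        0 < lam₁ → 0 < lam₂ → 0 < ξ₁ → 0 < ξ₂ → ξ₁ ≠ ξ₂ →
        volume ({p : ℝ × ℝ | |ξ₁ * (p.1 + s₁)| ≤ lam₁ ^ 2
                    ∧ |p.2 - x₁ + 3 * ξ₁ ^ 2 * (p.1 + s₁)| ≤ lam₁}
                ∩ {p : ℝ × ℝ | |ξ₂ * (p.1 + s₂)| ≤ lam₂ ^ 2
                    ∧ |p.2 - x₂ + 3 * ξ₂ ^ 2 * (p.1 + s₂)| ≤ lam₂})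
          ≤ ENNReal.ofReal (C * lam₁ * lam₂ / ((ξ₁ + ξ₂) * |ξ₁ - ξ₂|)) := by
  refine ⟨3, by norm_num, ?_⟩
  intro lam₁ lam₂ ξ₁ ξ₂ x₁ x₂ s₁ s₂ h1 h2 hξ1 hξ2 hne
  rcases le_total lam₁ lam₂ with hle | hle
  · exact para_aux lam₁ lam₂ ξ₁ ξ₂ x₁ x₂ s₁ s₂ h1 h2 hξ1 hξ2 hne hle
  · have h := para_aux lam₂ lam₁ ξ₂ ξ₁ x₂ x₁ s₂ s₁ h2 h1 hξ2 hξ1 (Ne.symm hne) hle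
    rw [Set.inter_comm]
    have heq : 3 * lam₂ * lam₁ / ((ξ₂ + ξ₁) * |ξ₂ - ξ₁|)
        = 3 * lam₁ * lam₂ / ((ξ₁ + ξ₂) * |ξ₁ - ξ₂|) := by
      rw [abs_sub_comm ξ₂ ξ₁]; ring_nf
    rw [← heq]
    exact h
end
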